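/- The pair (V₁ \ V₂, V₂), where V₁ ⊂ ℂ⁴ is the hypersurface x⁶ + y⁶ + x⁴zt + z³ = 0 and V₂ = {(0,0,0,t)} is its singular locus, fails Whitney's condition (a) at every point (0,0,0,ξ) with 4ξ³ + 27 = 0: there is a sequence p_ε ∈ V₁ \ V₂ converging to (0,0,0,ξ) whose tangent hyperplanes are constantly T = {t = 0}, while the tangent line of V₂ (the t-axis) is not contained in T. -/

import Mathlib

open Filter

/-- `f(x,y,z,t) = x⁶ + y⁶ + x⁴zt + z³`. -/
noncomputable def briSpe (p : ℂ × ℂ × ℂ × ℂ) : ℂ :=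
  p.1 ^ 6 + p.2.1 ^ 6 + p.1 ^ 4 * p.2.2.1 * p.2.2.2 + p.2.2.1 ^ 3

/-- The gradient of `briSpe`. -/
noncomputable def briSpeGrad (p : ℂ × ℂ × ℂ × ℂ) : ℂ × ℂ × ℂ × ℂ :=
  (6 * p.1 ^ 5 + 4 * p.1 ^ 3 * p.2.2.1 * p.2.2.2,
   6 * p.2.1 ^ 5,
   3 * p.2.2.1 ^ 2 + p.1 ^ 4 * p.2.2.2,
   p.1 ^ 4 * p.2.2.1)

theorem stmt19 (ξ : ℂ) (hξ : 4 * ξ ^ 3 + 27 = 0) :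
    ∃ p : ℕ → ℂ × ℂ × ℂ × ℂ,
      (∀ n, briSpe (p n) = 0 ∧
        ¬ ((p n).1 = 0 ∧ (p n).2.1 = 0 ∧ (p n).2.2.1 = 0)) ∧
      Tendsto p atTop (nhds (0, 0, 0, ξ)) ∧
      (∀ n, {v : ℂ × ℂ × ℂ × ℂ |
          (briSpeGrad (p n)).1 * v.1 + (briSpeGrad (p n)).2.1 * v.2.1
            + (briSpeGrad (p n)).2.2.1 * v.2.2.1
            + (briSpeGrad (p n)).2.2.2 * v.2.2.2 = 0}
        = {v : ℂ × ℂ × ℂ × ℂ | v.2.2.2 = 0}) ∧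
      ¬ ({v : ℂ × ℂ × ℂ × ℂ | v.1 = 0 ∧ v.2.1 = 0 ∧ v.2.2.1 = 0}
          ⊆ {v : ℂ × ℂ × ℂ × ℂ | v.2.2.2 = 0}) := by
  have hξ0 : ξ ≠ 0 := by
    intro h; rw [h] at hξ; norm_num at hξ
  set c : ℂ := 2 * ξ ^ 2 / 9 with hc
  have hc0 : c ≠ 0 := by
    simp [hc, hξ0]
  set ε : ℕ → ℂ := fun n => ((1 / ((n:ℝ) + 1) : ℝ) : ℂ) with hε
  have hεne : ∀ n, ε n ≠ 0 := by
    intro n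
    have h : (0:ℝ) < 1 / ((n:ℝ) + 1) := by positivity
    simp only [hε, ne_eq, Complex.ofReal_eq_zero]
    exact ne_of_gt h
  refine ⟨fun n => (ε n, 0, c * (ε n) ^ 2, ξ), ?_, ?_, ?_, ?_⟩
  · intro n
    constructor
    · show (ε n)^6 + 0^6 + (ε n)^4 * (c * (ε n)^2) * ξ + (c * (ε n)^2)^3 = 0
      rw [hc]
      linear_combination ((ε n)^6 * (2/729) * (ξ^3 + 27/2)) * hξ
    · rintro ⟨h1, -, -⟩
      exact hεne n h1
  · have h1 : Tendsto ε atTop (nhds 0) := by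
      rw [hε]
      have h0 := tendsto_one_div_add_atTop_nhds_zero_nat (𝕜 := ℝ)
      have := (Complex.continuous_ofReal.tendsto 0).comp h0
      simpa only [Function.comp_def, Complex.ofReal_zero] using this
    have h2 : Tendsto (fun n => c * (ε n)^2) atTop (nhds 0) := by
      have := (h1.pow 2).const_mul c
      simpa using this
    exact h1.prodMk_nhds (tendsto_const_nhds.prodMk_nhds
      (h2.prodMk_nhds tendsto_const_nhds))
  · intro n
    have g1 : 6 * (ε n) ^ 5 + 4 * (ε n) ^ 3 * (c * (ε n)^2) * ξ = 0 := by
      rw [hc]; linear_combination ((ε n)^5 * (2/9)) * hξ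
    have g3 : 3 * (c * (ε n)^2) ^ 2 + (ε n) ^ 4 * ξ = 0 := by
      rw [hc]; linear_combination ((ε n)^4 * ξ / 27) * hξ
    have g4 : (ε n) ^ 4 * (c * (ε n)^2) ≠ 0 := by
      exact mul_ne_zero (pow_ne_zero _ (hεne n)) (mul_ne_zero hc0 (pow_ne_zero _ (hεne n)))
    ext v
    simp only [briSpeGrad, Set.mem_setOf_eq]
    rw [g1, g3]
    constructor
    · intro h
      have : (ε n) ^ 4 * (c * (ε n)^2) * v.2.2.2 = 0 := by
        linear_combination h
      rcases mul_eq_zero.mp this with h' | h'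
      · exact absurd h' g4
      · exact h'
    · intro h
      rw [h]; ring
  · intro h
    have := h (a := (0,0,0,1)) ⟨rfl, rfl, rfl⟩
    simp at this
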